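/- Suppose X is nonempty and: (i) there is a continuous map m : X × X → X such that Δ(f)(s,t) = f(m(s,t)) for all f ∈ A and all s,t ∈ X, and m is associative; (ii) for all f, g ∈ A the functions Δ(f)·(1 ⊗ g) : (s,t) ↦ Δ(f)(s,t)·g(t) and Δ(f)·(g ⊗ 1) : (s,t) ↦ Δ(f)(s,t)·g(s) vanish at infinity on X × X; (iii) whenever f, g ∈ A satisfy Δ(f)·(1 ⊗ g) = 0 then f = 0 or g = 0, and whenever Δ(f)·(g ⊗ 1) = 0 then f = 0 or g = 0. Then (X, m) is a topological group: there exists an identity e ∈ X for m, every element has a two-sided inverse, and the inversion map is continuous. -/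

import Mathlib

open scoped ZeroAtInfty BoundedContinuousFunction
open Set Filter

lemma aux_bump {X : Type*} [TopologicalSpace X] [LocallyCompactSpace X] [T2Space X]
    {K U : Set X} (hK : IsCompact K) (hU : IsOpen U) (hKU : K ⊆ U) :
    ∃ f : C₀(X, ℂ), (∀ x ∈ K, f x = 1) ∧ (∀ x ∉ U, f x = 0) := by
  obtain ⟨f₀, hf1, hf0, hfc, -⟩ := exists_continuous_one_zero_of_isCompact hK
    hU.isClosed_compl (Set.disjoint_left.mpr fun x hx hxc => hxc (hKU hx))
  have hcs : HasCompactSupport (fun x => ((f₀ x : ℂ))) :=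
    (hfc.comp_left (g := (Complex.ofReal)) (by simp))
  refine ⟨⟨⟨fun x => (f₀ x : ℂ), Complex.continuous_ofReal.comp f₀.continuous⟩,
    hcs.is_zero_at_infty⟩, fun x hx => ?_, fun x hx => ?_⟩
  · simp only [ZeroAtInftyContinuousMap.coe_mk, ContinuousMap.coe_mk]
    rw [hf1 hx]; simp
  · simp only [ZeroAtInftyContinuousMap.coe_mk, ContinuousMap.coe_mk]
    rw [hf0 hx]; simp

lemma aux_surj {X : Type*} [TopologicalSpace X] [LocallyCompactSpace X] [T2Space X]
    (θ : X × X → X × X) (hθ : Continuous θ)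
    (hvan : ∀ f g : C₀(X, ℂ), Tendsto (fun p : X × X => f (θ p).1 * g (θ p).2)
      (cocompact (X × X)) (nhds 0))
    (hinj : ∀ f g : C₀(X, ℂ), (∀ p : X × X, f (θ p).1 * g (θ p).2 = 0) → f = 0 ∨ g = 0) :
    IsProperMap θ ∧ Function.Surjective θ := by
  have hproper : IsProperMap θ := by
    rw [isProperMap_iff_tendsto_cocompact]
    refine ⟨hθ, Filter.hasBasis_cocompact.tendsto_right_iff.mpr fun K hK => ?_⟩
    obtain ⟨f, hf1, -⟩ := aux_bump (hK.image continuous_fst) isOpen_univ (subset_univ _)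
    obtain ⟨g, hg1, -⟩ := aux_bump (hK.image continuous_snd) isOpen_univ (subset_univ _)
    filter_upwards [Metric.tendsto_nhds.mp (hvan f g) 1 one_pos] with p hp hmem
    rw [hf1 _ ⟨θ p, hmem, rfl⟩, hg1 _ ⟨θ p, hmem, rfl⟩] at hp
    simp at hp
  refine ⟨hproper, ?_⟩
  by_contra hns
  rw [Function.Surjective] at hns
  push_neg at hns
  obtain ⟨q, hq⟩ := hns
  have hcl : IsClosed (range θ) := hproper.isClosedMap.isClosed_range
  obtain ⟨U, V, hUo, hVo, hqU, hqV, hUV⟩ := isOpen_prod_iff.mp hcl.isOpen_compl q.1 q.2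
    (by simp only [Set.mem_compl_iff, Set.mem_range]; rintro ⟨p, hp⟩; exact hq p hp)
  obtain ⟨f, hf1, hf0⟩ := aux_bump isCompact_singleton hUo (singleton_subset_iff.mpr hqU)
  obtain ⟨g, hg1, hg0⟩ := aux_bump isCompact_singleton hVo (singleton_subset_iff.mpr hqV)
  have hz : ∀ p : X × X, f (θ p).1 * g (θ p).2 = 0 := by
    intro p
    have hnm : θ p ∉ U ×ˢ V := fun h => hUV h ⟨p, rfl⟩
    rw [Set.mem_prod] at hnm
    rcases not_and_or.mp hnm with h | h
    · rw [hf0 _ h, zero_mul]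
    · rw [hg0 _ h, mul_zero]
  rcases hinj f g hz with h | h
  · have := hf1 q.1 rfl; rw [h] at this; simp at this
  · have := hg1 q.2 rfl; rw [h] at this; simp at this
theorem stmt1 {X : Type*} [TopologicalSpace X] [LocallyCompactSpace X] [T2Space X]
    [Nonempty X]
    (Δ : C₀(X, ℂ) →⋆ₙₐ[ℂ] ((X × X) →ᵇ ℂ))
    (m : X × X → X) (hm : Continuous m)
    (hΔ : ∀ (f : C₀(X, ℂ)) (s t : X), Δ f (s, t) = f (m (s, t)))
    (hassoc : ∀ r s t : X, m (m (r, s), t) = m (r, m (s, t)))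
    (hvan₁ : ∀ f g : C₀(X, ℂ),
      Filter.Tendsto (fun p : X × X => Δ f p * g p.2)
        (Filter.cocompact (X × X)) (nhds 0))
    (hvan₂ : ∀ f g : C₀(X, ℂ),
      Filter.Tendsto (fun p : X × X => Δ f p * g p.1)
        (Filter.cocompact (X × X)) (nhds 0))
    (hinj₁ : ∀ f g : C₀(X, ℂ), (∀ p : X × X, Δ f p * g p.2 = 0) → f = 0 ∨ g = 0)
    (hinj₂ : ∀ f g : C₀(X, ℂ), (∀ p : X × X, Δ f p * g p.1 = 0) → f = 0 ∨ g = 0) :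
    ∃ e : X, ∃ inv : X → X, Continuous inv ∧
      (∀ x : X, m (e, x) = x ∧ m (x, e) = x) ∧
      (∀ x : X, m (x, inv x) = e ∧ m (inv x, x) = e) := by
  have hΔ' : ∀ (f : C₀(X, ℂ)) (p : X × X), Δ f p = f (m p) := fun f p => hΔ f p.1 p.2
  set θ₁ : X × X → X × X := fun p => (m p, p.2) with hθ₁def
  set θ₂ : X × X → X × X := fun p => (m p, p.1) with hθ₂def
  obtain ⟨hp₁, hs₁⟩ := aux_surj θ₁ (hm.prodMk continuous_snd)
    (fun f g => (hvan₁ f g).congr (fun p => by rw [hΔ']))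
    (fun f g h => hinj₁ f g (fun p => by rw [hΔ']; exact h p))
  obtain ⟨-, hs₂⟩ := aux_surj θ₂ (hm.prodMk continuous_fst)
    (fun f g => (hvan₂ f g).congr (fun p => by rw [hΔ']))
    (fun f g h => hinj₂ f g (fun p => by rw [hΔ']; exact h p))
  -- solvability of equations
  have hsolL : ∀ b t : X, ∃ s, m (s, t) = b := by
    intro b t
    obtain ⟨⟨s, t'⟩, hp⟩ := hs₁ (b, t)
    simp only [hθ₁def, Prod.mk.injEq] at hp
    obtain ⟨h1, h2⟩ := hp
    exact ⟨s, h2 ▸ h1⟩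
  have hsolR : ∀ b s : X, ∃ t, m (s, t) = b := by
    intro b s
    obtain ⟨⟨s', t⟩, hp⟩ := hs₂ (b, s)
    simp only [hθ₂def, Prod.mk.injEq] at hp
    obtain ⟨h1, h2⟩ := hp
    exact ⟨t, h2 ▸ h1⟩
  -- identity
  obtain ⟨a⟩ := ‹Nonempty X›
  obtain ⟨e, he⟩ := hsolL a a
  have heL : ∀ b, m (e, b) = b := by
    intro b
    obtain ⟨x, hx⟩ := hsolR b a
    rw [← hx, ← hassoc, he]
  obtain ⟨e', he'⟩ := hsolR a a
  have heR' : ∀ b, m (b, e') = b := by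
    intro b
    obtain ⟨y, hy⟩ := hsolL b a
    rw [← hy, hassoc, he']
  have hee : e = e' := by rw [← heL e', heR' e]
  have heR : ∀ b, m (b, e) = b := fun b => by rw [hee]; exact heR' b
  -- two-sided inverses exist
  have hinv : ∀ x : X, ∃ y, m (x, y) = e ∧ m (y, x) = e := by
    intro x
    obtain ⟨r, hr⟩ := hsolR e x
    obtain ⟨l, hl⟩ := hsolL e x
    have hlr : l = r := by rw [← heR l, ← hr, ← hassoc, hl, heL]
    exact ⟨r, hr, hlr ▸ hl⟩
  -- θ₁ is bijective
  have hinj : Function.Injective θ₁ := by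
    rintro ⟨s, t⟩ ⟨s', t'⟩ hp
    obtain ⟨h1, h2⟩ := Prod.ext_iff.mp hp
    simp only [hθ₁def] at h1 h2
    subst h2
    obtain ⟨y, hy, -⟩ := hinv t
    have : s = s' := by
      rw [← heR s, ← hy, ← hassoc, h1, hassoc, hy, heR]
    rw [this]
  set E : (X × X) ≃ (X × X) := Equiv.ofBijective θ₁ ⟨hinj, hs₁⟩ with hEdef
  have hEcont : Continuous (E.symm : X × X → X × X) := by
    rw [continuous_iff_isClosed]
    intro C hC
    have himg : (E.symm : X × X → X × X) ⁻¹' C = θ₁ '' C := by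
      rw [← Equiv.image_eq_preimage_symm]; rfl
    rw [himg]
    exact hp₁.isClosedMap C hC
  refine ⟨e, fun t => (E.symm (e, t)).1,
    continuous_fst.comp (hEcont.comp (continuous_const.prodMk continuous_id)),
    fun x => ⟨heL x, heR x⟩, fun x => ?_⟩
  have hap : θ₁ (E.symm (e, x)) = (e, x) := E.apply_symm_apply (e, x)
  have h1 : m (E.symm (e, x)) = e := congrArg Prod.fst hap
  have h2 : (E.symm (e, x)).2 = x := congrArg Prod.snd hap
  have hpair : E.symm (e, x) = ((E.symm (e, x)).1, x) := Prod.ext_iff.mpr ⟨rfl, h2⟩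
  have hleft : m ((E.symm (e, x)).1, x) = e := by rw [← hpair]; exact h1
  obtain ⟨y, hy1, hy2⟩ := hinv x
  have hzy : (E.symm (e, x)).1 = y := by
    have h3 : m (m ((E.symm (e, x)).1, x), y) = m (e, y) := by rw [hleft]
    rw [hassoc, hy1, heR, heL] at h3
    exact h3
  constructor
  · show m (x, (E.symm (e, x)).1) = e
    rw [hzy]; exact hy1
  · exact hleft
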